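/- Let X be an additive category with weak kernels in which every epimorphism is a weak cokernel, and let q : mod X → (mod X)/(eff X) be the Serre quotient functor. Then for every finitely presented functor F and every X ∈ X, the map Hom_{mod X}(F, X(-,X)) → Hom_{(mod X)/(eff X)}(q(F), q(X(-,X))) induced by q is an isomorphism. In particular, the composite of the Yoneda embedding X → mod X with q is fully faithful. -/

import Mathlib

open CategoryTheory CategoryTheory.Limits

set_option linter.unusedSectionVars false

universe v u

variable {C : Type u} [Category.{v} C] [Preadditive C] [HasFiniteBiproducts C]

/-- `f : A ⟶ B` is a weak kernel of `g : B ⟶ X` -/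
def IsWeakKernel {A B X : C} (f : A ⟶ B) (g : B ⟶ X) : Prop :=
  f ≫ g = 0 ∧ ∀ ⦃T : C⦄ (l : T ⟶ B), l ≫ g = 0 → ∃ k : T ⟶ A, k ≫ f = l

/-- `h : B ⟶ X` is a weak cokernel of `f : A ⟶ B` -/
def IsWeakCokernel {A B X : C} (h : B ⟶ X) (f : A ⟶ B) : Prop :=
  f ≫ h = 0 ∧ ∀ ⦃T : C⦄ (l : B ⟶ T), f ≫ l = 0 → ∃ k : X ⟶ T, h ≫ k = l

/-- `C` has weak kernels. -/
def HasWeakKernels : Prop :=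
  ∀ ⦃a b : C⦄ (f : a ⟶ b), ∃ (c : C) (k : c ⟶ a), IsWeakKernel k f

/-- Every epimorphism of `C` is a weak cokernel. -/
def EpiIsWeakCokernel : Prop :=
  ∀ ⦃a b : C⦄ (f : a ⟶ b), Epi f → ∃ (c : C) (g : c ⟶ a), IsWeakCokernel f g

variable (C) in
/-- A functor `F : Cᵒᵖ ⥤ Ab` is finitely presented if it is the cokernel of a morphism
between representable functors. -/
def IsFP (F : Cᵒᵖ ⥤ AddCommGrpCat.{v}) : Prop :=
  ∃ (X₁ X₀ : C) (f : X₁ ⟶ X₀) (p : preadditiveYoneda.obj X₀ ⟶ F)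
    (w : preadditiveYoneda.map f ≫ p = 0),
    Nonempty (IsColimit (CokernelCofork.ofπ p w))

variable (C) in
/-- A functor `F : Cᵒᵖ ⥤ Ab` is effaceable if it admits a presentation induced by an
epimorphism of `C`. -/
def IsEff (F : Cᵒᵖ ⥤ AddCommGrpCat.{v}) : Prop :=
  ∃ (X₁ X₀ : C) (f : X₁ ⟶ X₀), Epi f ∧
    ∃ (p : preadditiveYoneda.obj X₀ ⟶ F) (w : preadditiveYoneda.map f ≫ p = 0),
      Nonempty (IsColimit (CokernelCofork.ofπ p w))

lemma preadditiveYoneda_map_zero {X Y : C} :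
    preadditiveYoneda.map (0 : X ⟶ Y) = 0 := by
  ext Z g
  simp

lemma isFP_preadditiveYoneda (X : C) : IsFP C (preadditiveYoneda.obj X) :=
  ⟨X, X, 0, 𝟙 _, by rw [preadditiveYoneda_map_zero]; simp,
    ⟨CokernelCofork.IsColimit.ofId _ preadditiveYoneda_map_zero⟩⟩

variable (C) in
/-- The category `mod C` of finitely presented functors. -/
abbrev ModCat := ObjectProperty.FullSubcategory (IsFP C)

variable (C) in
/-- The class of morphisms of `mod C` whose kernel and cokernel (computed in the ambient
functor category) are effaceable. -/
def effW : MorphismProperty (ModCat C) := fun F G φ =>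
  IsEff C (kernel (show F.obj ⟶ G.obj from φ.hom)) ∧
    IsEff C (cokernel (show F.obj ⟶ G.obj from φ.hom))

variable (C) in
/-- The Yoneda embedding `C ⥤ mod C`. -/
def yonedaMod : C ⥤ ModCat C :=
  ObjectProperty.lift _ preadditiveYoneda isFP_preadditiveYoneda


section Helpers

lemma cofork_epi_pi {D : Type*} [Category D] [HasZeroMorphisms D]
    {A B P : D} {f : A ⟶ B} {p : B ⟶ P} {w : f ≫ p = 0}
    (hc : IsColimit (CokernelCofork.ofπ p w)) : Epi p :=
  ⟨fun a b hab => Cofork.IsColimit.hom_ext hc (by simpa using hab)⟩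

lemma IsEff.hom_eq_zero {E : Cᵒᵖ ⥤ AddCommGrpCat.{v}} (hE : IsEff C E) {X : C}
    (ψ : E ⟶ preadditiveYoneda.obj X) : ψ = 0 := by
  obtain ⟨X₁, X₀, f, hf, p, w, ⟨hc⟩⟩ := hE
  have hp : Epi p := cofork_epi_pi hc
  obtain ⟨g, hg⟩ := preadditiveYoneda.map_surjective (p ≫ ψ)
  have h1 : f ≫ g = 0 := by
    apply preadditiveYoneda.map_injective
    rw [preadditiveYoneda_map_zero, Functor.map_comp, hg, ← Category.assoc, w, zero_comp]
  have h2 : g = 0 := (cancel_epi f).1 (by rw [h1, comp_zero])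
  rw [← cancel_epi p, comp_zero, ← hg, h2, preadditiveYoneda_map_zero]

lemma IsEff.of_iso {E E' : Cᵒᵖ ⥤ AddCommGrpCat.{v}} (hE : IsEff C E) (i : E ≅ E') :
    IsEff C E' := by
  obtain ⟨X₁, X₀, f, hf, p, w, ⟨hc⟩⟩ := hE
  refine ⟨X₁, X₀, f, hf, p ≫ i.hom, by rw [← Category.assoc, w, zero_comp], ⟨?_⟩⟩
  exact IsColimit.ofIsoColimit hc (Cofork.ext i (by simp))

lemma app_naturality_apply {F G : Cᵒᵖ ⥤ AddCommGrpCat.{v}} (e : F ⟶ G) {c c' : Cᵒᵖ}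
    (u : c ⟶ c') (y : F.obj c) :
    e.app c' (F.map u y) = G.map u (e.app c y) := by
  exact ConcreteCategory.congr_hom (e.naturality u) y

end Helpers

section Additivity

lemma additive_of_epi {F G : Cᵒᵖ ⥤ AddCommGrpCat.{v}} [F.Additive] (e : F ⟶ G) [Epi e] :
    G.Additive := by
  have hsurj : ∀ c, Function.Surjective (e.app c) := fun c =>
    (AddCommGrpCat.epi_iff_surjective _).1 inferInstance
  constructor
  intro c c' u u'
  ext x
  obtain ⟨y, rfl⟩ := hsurj c x
  rw [← app_naturality_apply, Functor.map_add, AddCommGrpCat.hom_add_apply, map_add,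
    app_naturality_apply, app_naturality_apply]
  rfl

lemma additive_of_mono {F G : Cᵒᵖ ⥤ AddCommGrpCat.{v}} [G.Additive] (m : F ⟶ G) [Mono m] :
    F.Additive := by
  have hinj : ∀ c, Function.Injective (m.app c) := fun c =>
    (AddCommGrpCat.mono_iff_injective _).1 inferInstance
  constructor
  intro c c' u u'
  ext x
  apply hinj c'
  rw [AddCommGrpCat.hom_add_apply, map_add]
  simp only [app_naturality_apply]
  rw [Functor.map_add, AddCommGrpCat.hom_add_apply]

lemma additive_biprod {F G : Cᵒᵖ ⥤ AddCommGrpCat.{v}} [F.Additive] [G.Additive] :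
    (F ⊞ G).Additive := by
  constructor
  intro c c' u u'
  ext x
  have h1 : (biprod.fst : F ⊞ G ⟶ F).app c' ((F ⊞ G).map (u + u') x) =
      (biprod.fst : F ⊞ G ⟶ F).app c' (((F ⊞ G).map u + (F ⊞ G).map u') x) := by
    rw [AddCommGrpCat.hom_add_apply, map_add]
    simp only [app_naturality_apply]
    rw [Functor.map_add, AddCommGrpCat.hom_add_apply]
  have h2 : (biprod.snd : F ⊞ G ⟶ G).app c' ((F ⊞ G).map (u + u') x) =
      (biprod.snd : F ⊞ G ⟶ G).app c' (((F ⊞ G).map u + (F ⊞ G).map u') x) := by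
    rw [AddCommGrpCat.hom_add_apply, map_add]
    simp only [app_naturality_apply]
    rw [Functor.map_add, AddCommGrpCat.hom_add_apply]
  have htot := biprod.total (X := F) (Y := G)
  have key : ∀ z : (F ⊞ G).obj c',
      (biprod.inl : F ⟶ F ⊞ G).app c' ((biprod.fst : F ⊞ G ⟶ F).app c' z) +
        (biprod.inr : G ⟶ F ⊞ G).app c' ((biprod.snd : F ⊞ G ⟶ G).app c' z) = z := fun z =>
    ConcreteCategory.congr_hom (congrArg (fun (t : F ⊞ G ⟶ F ⊞ G) => t.app c') htot) z
  rw [← key (((F ⊞ G).map (u + u')) x), ← key (((F ⊞ G).map u + (F ⊞ G).map u') x), h1, h2]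

lemma IsFP.additive {F : Cᵒᵖ ⥤ AddCommGrpCat.{v}} (hF : IsFP C F) : F.Additive := by
  obtain ⟨X₁, X₀, f, p, w, ⟨hc⟩⟩ := hF
  have : Epi p := cofork_epi_pi hc
  exact additive_of_epi p

end Additivity

section Splitting

lemma exists_retraction (hewc : EpiIsWeakCokernel (C := C))
    {Q : Cᵒᵖ ⥤ AddCommGrpCat.{v}} [Q.Additive] {X : C}
    (m' : preadditiveYoneda.obj X ⟶ Q) [Mono m'] (heff : IsEff C (cokernel m')) :
    ∃ r : Q ⟶ preadditiveYoneda.obj X, m' ≫ r = 𝟙 _ := by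
  obtain ⟨X₁, X₀, f, hf, p, w, ⟨hc⟩⟩ := heff
  have hp : Epi p := cofork_epi_pi hc
  have hπsurj : Function.Surjective ((cokernel.π m').app (Opposite.op X₀)) :=
    (AddCommGrpCat.epi_iff_surjective _).1 inferInstance
  obtain ⟨gE, hgE⟩ := hπsurj (p.app (Opposite.op X₀) (𝟙 X₀))
  let s : preadditiveYoneda.obj X₀ ⟶ Q :=
    { app := fun c => AddCommGrpCat.ofHom (AddMonoidHom.mk' (fun (u : c.unop ⟶ X₀) => Q.map u.op gE) (fun (u u' : c.unop ⟶ X₀) => by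
        show Q.map (u + u').op gE = Q.map u.op gE + Q.map u'.op gE
        rw [op_add, Functor.map_add, AddCommGrpCat.hom_add_apply]))
      naturality := fun c c' wc => by
        ext u
        simp only [CategoryTheory.comp_apply]
        revert u; intro (u : c.unop ⟶ X₀)
        show Q.map (wc.unop ≫ u).op gE = Q.map wc (Q.map u.op gE)
        rw [op_comp, Quiver.Hom.op_unop, Functor.map_comp]
        rfl }
  have hs : s ≫ cokernel.π m' = p := by
    ext c u
    show (cokernel.π m').app c (Q.map u.op gE) = p.app c u
    have h1 : (cokernel.π m').app c (Q.map u.op gE) =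
        (cokernel m').map u.op ((cokernel.π m').app _ gE) :=
      app_naturality_apply (cokernel.π m') u.op gE
    have h3 : (preadditiveYoneda.obj X₀).map u.op (𝟙 X₀) = u := by
      show u ≫ 𝟙 X₀ = u
      exact Category.comp_id _
    have h2 := app_naturality_apply p u.op (𝟙 X₀)
    rw [h3] at h2
    rw [h1, hgE, ← h2]
  obtain ⟨h, hh⟩ : ∃ h : preadditiveYoneda.obj X₁ ⟶ preadditiveYoneda.obj X,
      h ≫ m' = preadditiveYoneda.map f ≫ s :=
    ⟨Abelian.monoLift m' _ (by rw [Category.assoc, hs, w]), Abelian.monoLift_comp _ _ _⟩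
  obtain ⟨u₁, hu₁⟩ := preadditiveYoneda.map_surjective h
  obtain ⟨X₂, g, hg0, hgl⟩ := hewc f hf
  have hgu : g ≫ u₁ = 0 := by
    apply preadditiveYoneda.map_injective
    rw [preadditiveYoneda_map_zero, Functor.map_comp, hu₁]
    have hz : (preadditiveYoneda.map g ≫ h) ≫ m' = 0 := by
      rw [Category.assoc, hh, ← Category.assoc, ← Functor.map_comp, hg0,
        preadditiveYoneda_map_zero, zero_comp]
    exact (cancel_mono m').1 (by rw [hz, zero_comp])
  obtain ⟨v, hv⟩ := hgl u₁ hgu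
  have hws' : preadditiveYoneda.map f ≫ (s - preadditiveYoneda.map v ≫ m') = 0 := by
    rw [Preadditive.comp_sub, ← hh, ← Category.assoc, ← Functor.map_comp, hv, hu₁,
      sub_self]
  obtain ⟨e, he⟩ := CokernelCofork.IsColimit.desc' hc (s - preadditiveYoneda.map v ≫ m') hws'
  simp only [Cofork.π_ofπ] at he
  have he' : p ≫ e = s - preadditiveYoneda.map v ≫ m' := he
  have hep : e ≫ cokernel.π m' = 𝟙 (cokernel m') := by
    apply (cancel_epi p).1
    rw [← Category.assoc, he', Preadditive.sub_comp, hs, Category.assoc,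
      cokernel.condition, comp_zero, sub_zero, Category.comp_id]
  obtain ⟨r, hr⟩ : ∃ r : Q ⟶ preadditiveYoneda.obj X, r ≫ m' = 𝟙 Q - cokernel.π m' ≫ e :=
    ⟨Abelian.monoLift m' _ (by rw [Preadditive.sub_comp, Category.id_comp, Category.assoc,
        hep, Category.comp_id, sub_self]), Abelian.monoLift_comp _ _ _⟩
  refine ⟨r, (cancel_mono m').1 ?_⟩
  rw [Category.assoc, hr, Preadditive.comp_sub, Category.comp_id, ← Category.assoc,
    cokernel.condition, zero_comp, sub_zero, Category.id_comp]

end Splitting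

section Extension

lemma extension_lemma (hewc : EpiIsWeakCokernel (C := C))
    {I G : Cᵒᵖ ⥤ AddCommGrpCat.{v}} [G.Additive] (m : I ⟶ G) [Mono m]
    (heff : IsEff C (cokernel m)) {X : C} (t : I ⟶ preadditiveYoneda.obj X) :
    ∃ ψ : G ⟶ preadditiveYoneda.obj X, m ≫ ψ = t := by
  haveI : Mono (pushout.inl t m) := Abelian.mono_pushout_of_mono_g t m
  -- the pushout is additive
  haveI hbadd : (preadditiveYoneda.obj X ⊞ G).Additive := additive_biprod
  have hepi : Epi (biprod.desc (pushout.inl t m) (pushout.inr t m)) := by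
    refine Preadditive.epi_of_cancel_zero _ (fun {T} c hc => ?_)
    have h1 : pushout.inl t m ≫ c = 0 := by
      rw [← biprod.inl_desc (pushout.inl t m) (pushout.inr t m), Category.assoc, hc, comp_zero]
    have h2 : pushout.inr t m ≫ c = 0 := by
      rw [← biprod.inr_desc (pushout.inl t m) (pushout.inr t m), Category.assoc, hc, comp_zero]
    apply pushout.hom_ext <;> simp [h1, h2]
  haveI hPadd : (pushout t m).Additive :=
    additive_of_epi (biprod.desc (pushout.inl t m) (pushout.inr t m))
  -- cokernel m ≅ cokernel (pushout.inl t m)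
  have hcond := pushout.condition (f := t) (g := m)
  let α : cokernel m ⟶ cokernel (pushout.inl t m) :=
    cokernel.desc m (pushout.inr t m ≫ cokernel.π (pushout.inl t m)) (by
      rw [← Category.assoc, ← hcond, Category.assoc, cokernel.condition, comp_zero])
  let β : cokernel (pushout.inl t m) ⟶ cokernel m :=
    cokernel.desc (pushout.inl t m) (pushout.desc 0 (cokernel.π m) (by
      rw [comp_zero, cokernel.condition])) (pushout.inl_desc _ _ _)
  have hαβ : α ≫ β = 𝟙 _ := by
    apply (cancel_epi (cokernel.π m)).1
    simp [α, β, pushout.inr_desc]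
  have hβα : β ≫ α = 𝟙 _ := by
    apply (cancel_epi (cokernel.π (pushout.inl t m))).1
    rw [← Category.assoc, Category.comp_id]
    simp only [cokernel.π_desc, β]
    apply pushout.hom_ext
    · rw [← Category.assoc, pushout.inl_desc, zero_comp, cokernel.condition]
    · rw [← Category.assoc, pushout.inr_desc, cokernel.π_desc]
  have heff' : IsEff C (cokernel (pushout.inl t m)) :=
    heff.of_iso ⟨α, β, hαβ, hβα⟩
  obtain ⟨r, hr⟩ := exists_retraction hewc (pushout.inl t m) heff'
  refine ⟨pushout.inr t m ≫ r, ?_⟩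
  rw [← Category.assoc, ← hcond, Category.assoc, hr, Category.comp_id]

end Extension

section Local

lemma effW_local (hewc : EpiIsWeakCokernel (C := C)) {F G : ModCat C} (φ : F ⟶ G)
    (hφ : effW C φ) (X : C) :
    Function.Bijective (fun g : G ⟶ (yonedaMod C).obj X => φ ≫ g) := by
  obtain ⟨hk, hcok⟩ := hφ
  set φ' : F.obj ⟶ G.obj := φ.hom with hφ'
  constructor
  · intro g₁ g₂ hg
    have hsub : φ' ≫ (g₁.hom - g₂.hom) = 0 := by
      rw [Preadditive.comp_sub]
      rw [sub_eq_zero]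
      exact congrArg (fun k => k.hom) hg
    have hdesc := cokernel.π_desc φ' _ hsub
    have : cokernel.desc φ' _ hsub = 0 := hcok.hom_eq_zero _
    rw [this, comp_zero] at hdesc
    have : g₁.hom - g₂.hom = 0 := hdesc.symm
    exact InducedCategory.hom_ext (sub_eq_zero.1 this)
  · intro ψ
    have h0 : kernel.ι φ' ≫ ψ.hom = 0 :=
      hk.hom_eq_zero _
    let t : Abelian.coimage φ' ⟶ preadditiveYoneda.obj X :=
      cokernel.desc (kernel.ι φ') ψ.hom h0
    have ht : Abelian.coimage.π φ' ≫ t = ψ.hom := cokernel.π_desc _ _ _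
    haveI : (G.obj).Additive := G.property.additive
    have hfac : Abelian.coimage.π φ' ≫ Abelian.factorThruCoimage φ' = φ' :=
      Abelian.coimage.fac φ'
    have heffm : IsEff C (cokernel (Abelian.factorThruCoimage φ')) := by
      refine hcok.of_iso ?_
      refine (cokernelIsoOfEq hfac.symm) ≪≫ cokernelEpiComp (Abelian.coimage.π φ')
        (Abelian.factorThruCoimage φ')
    obtain ⟨psi2, hpsi2⟩ := extension_lemma hewc (Abelian.factorThruCoimage φ') heffm t
    refine ⟨InducedCategory.homMk psi2, InducedCategory.hom_ext ?_⟩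
    show φ' ≫ psi2 = ψ.hom
    rw [← hfac, Category.assoc, hpsi2, ht]

end Local

section LocalizationLemma

universe v₁ u₁

variable {𝒞 : Type u₁} [Category.{v₁} 𝒞] (W : MorphismProperty 𝒞)

lemma Qmap_bijective (Y : 𝒞)
    (hY : ∀ ⦃A B : 𝒞⦄ (w : A ⟶ B), W w → Function.Bijective (fun g : B ⟶ Y => w ≫ g))
    (X : 𝒞) : Function.Bijective (fun g : X ⟶ Y => W.Q.map g) := by
  have hinv : W.op.IsInvertedBy (yoneda.obj Y ⋙ uliftFunctor.{u₁}) := by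
    intro A B w hw
    rw [CategoryTheory.isIso_iff_bijective]
    have hb : Function.Bijective
        (fun (x : ULift.{u₁} (A.unop ⟶ Y)) => ULift.up.{u₁} (w.unop ≫ x.down)) :=
      (Equiv.ulift.{u₁}.symm.bijective.comp (hY w.unop hw)).comp Equiv.ulift.{u₁}.bijective
    exact hb
  let Φ' := Localization.lift (yoneda.obj Y ⋙ uliftFunctor.{u₁}) hinv W.Q.op
  let e := Localization.Lifting.iso W.Q.op W.op (yoneda.obj Y ⋙ uliftFunctor.{u₁}) Φ'
  let ε : Φ'.obj (Opposite.op (W.Q.obj Y)) := e.inv.app (Opposite.op Y) (ULift.up (𝟙 Y))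
  have hε : e.hom.app (Opposite.op Y) ε = ULift.up (𝟙 Y) :=
    types_congr_hom (NatTrans.congr_app e.inv_hom_id (Opposite.op Y)) (ULift.up (𝟙 Y))
  let ν : (yoneda.obj Y ⋙ uliftFunctor.{u₁}) ⟶ W.Q.op ⋙ yoneda.obj (W.Q.obj Y) :=
    { app := fun Z => TypeCat.ofHom (fun g => W.Q.map g.down)
      naturality := fun Z Z' h => by
        ext g
        show W.Q.map (h.unop ≫ g.down) = W.Q.map h.unop ≫ W.Q.map g.down
        rw [Functor.map_comp] }
  let μ := Localization.liftNatTrans W.Q.op W.op (yoneda.obj Y ⋙ uliftFunctor.{u₁})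
    (W.Q.op ⋙ yoneda.obj (W.Q.obj Y)) Φ' (yoneda.obj (W.Q.obj Y)) ν
  have hμ : ∀ (Z : 𝒞ᵒᵖ) (x : Φ'.obj (W.Q.op.obj Z)),
      μ.app (W.Q.op.obj Z) x = ν.app Z (e.hom.app Z x) := by
    intro Z x
    have h := ConcreteCategory.congr_hom (Localization.liftNatTrans_app W.Q.op W.op
      (yoneda.obj Y ⋙ uliftFunctor.{u₁}) (W.Q.op ⋙ yoneda.obj (W.Q.obj Y)) Φ'
      (yoneda.obj (W.Q.obj Y)) ν Z) x
    simp only [Localization.Lifting.compLeft_iso, Iso.refl_inv, NatTrans.id_app,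
      types_comp_apply, types_id_apply] at h
    exact h
  let θ : yoneda.obj (W.Q.obj Y) ⟶ Φ' :=
    { app := fun d => TypeCat.ofHom (fun g => Φ'.map g.op ε)
      naturality := fun d d' h => by
        ext g
        show Φ'.map (h.unop ≫ g).op ε = Φ'.map h (Φ'.map g.op ε)
        rw [op_comp, Quiver.Hom.op_unop, Functor.map_comp]
        rfl }
  have key : ∀ g : X ⟶ Y,
      e.hom.app (Opposite.op X) (Φ'.map (W.Q.map g).op ε) = ULift.up (g ≫ 𝟙 Y) := by
    intro g
    have hnat := ConcreteCategory.congr_hom (e.hom.naturality (g.op : Opposite.op Y ⟶ Opposite.op X)) ε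
    simp only [types_comp_apply] at hnat
    rw [hε] at hnat
    exact hnat
  constructor
  · -- injectivity
    intro g₁ g₂ hg
    have h1 := key g₁
    rw [show W.Q.map g₁ = W.Q.map g₂ from hg, key g₂] at h1
    have := congrArg ULift.down h1
    simpa using this.symm
  · -- surjectivity
    intro f'
    refine ⟨(e.hom.app (Opposite.op X) (Φ'.map f'.op ε)).down, ?_⟩
    have hc : μ.app (Opposite.op (W.Q.obj Y)) (θ.app (Opposite.op (W.Q.obj Y))
        (𝟙 (W.Q.obj Y))) = 𝟙 (W.Q.obj Y) := by
      have h1 : θ.app (Opposite.op (W.Q.obj Y)) (𝟙 (W.Q.obj Y)) = ε := by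
        show Φ'.map (𝟙 (W.Q.obj Y)).op ε = ε
        have hid : (𝟙 (W.Q.obj Y)).op = 𝟙 (Opposite.op (W.Q.obj Y)) := rfl
        rw [hid, CategoryTheory.Functor.map_id]
        rfl
      rw [h1]
      have h2 := hμ (Opposite.op Y) ε
      rw [hε] at h2
      have h3 : ν.app (Opposite.op Y) (ULift.up (𝟙 Y)) = W.Q.map (𝟙 Y) := rfl
      rw [h3, CategoryTheory.Functor.map_id] at h2
      exact h2
    have hσ := ConcreteCategory.congr_hom ((θ ≫ μ).naturality
      (f'.op : Opposite.op (W.Q.obj Y) ⟶ Opposite.op (W.Q.obj X))) (𝟙 (W.Q.obj Y))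
    simp only [NatTrans.comp_app, types_comp_apply, yoneda_obj_map, Quiver.Hom.unop_op, TypeCat.ofHom_apply,
      Category.comp_id] at hσ
    rw [hc, Category.comp_id] at hσ
    have h4 : μ.app (Opposite.op (W.Q.obj X)) (θ.app (Opposite.op (W.Q.obj X)) f') =
        ν.app (Opposite.op X) (e.hom.app (Opposite.op X) (Φ'.map f'.op ε)) :=
      hμ (Opposite.op X) _
    rw [h4] at hσ
    exact hσ

end LocalizationLemma


/-- The localization functor `q : mod C ⟶ (mod C)/(eff C)` induces bijections on
morphisms into representable functors; in particular the composite of the Yoneda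
embedding with `q` is fully faithful. -/
theorem localization_hom_bijective
    (hwk : _root_.HasWeakKernels (C := C)) (hewc : EpiIsWeakCokernel (C := C)) :
    (∀ (F : ModCat C) (X : C),
      Function.Bijective
        (fun φ : F ⟶ (yonedaMod C).obj X => (effW C).Q.map φ)) ∧
    (∀ (X X' : C),
      Function.Bijective
        (fun f : X ⟶ X' => ((yonedaMod C) ⋙ (effW C).Q).map f)) := by
  have part1 : ∀ (F : ModCat C) (X : C),
      Function.Bijective (fun φ : F ⟶ (yonedaMod C).obj X => (effW C).Q.map φ) := by
    intro F X
    exact Qmap_bijective (effW C) ((yonedaMod C).obj X)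
      (fun A B w hw => effW_local hewc w hw X) F
  refine ⟨part1, fun X X' => ?_⟩
  have h2 : Function.Bijective (fun f : X ⟶ X' =>
      ((yonedaMod C).map f : (yonedaMod C).obj X ⟶ (yonedaMod C).obj X')) :=
    ⟨fun a b h => preadditiveYoneda.map_injective (congrArg (fun k => k.hom) h), fun φ =>
      let ⟨f, hf⟩ := preadditiveYoneda.map_surjective φ.hom; ⟨f, InducedCategory.hom_ext hf⟩⟩
  exact (part1 ((yonedaMod C).obj X) X').comp h2
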